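/- Let f : X → Y be a continuous map between topological spaces equipped with filtrations ∅ = X_{−1} ⊆ X_0 ⊆ X_1 ⊆ ⋯ ⊆ X_m = X and ∅ = Y_{−1} ⊆ Y_0 ⊆ Y_1 ⊆ ⋯ ⊆ Y_m = Y by subspaces, such that f(X_i) ⊆ Y_i for all i. If the induced map on relative singular homology f_* : H_j(X_i, X_{i−1}; ℤ) → H_j(Y_i, Y_{i−1}; ℤ) is an isomorphism for all i = 0, …, m and all j ≤ k+1, then f_* : H_j(X; ℤ) → H_j(Y; ℤ) is an isomorphism for all j ≤ k. -/

import Mathlib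

open CategoryTheory AlgebraicTopology Limits

/-- The singular chain complex of a topological space with `ℤ` coefficients: the
alternating face map complex of the levelwise free `ℤ`-module on the singular
simplicial set. -/
noncomputable def singularChains (X : TopCat) : ChainComplex (ModuleCat ℤ) ℕ :=
  (alternatingFaceMapComplex (ModuleCat ℤ)).obj
    (((SimplicialObject.whiskering _ _).obj (ModuleCat.free ℤ)).obj (TopCat.toSSet.obj X))

/-- The chain map induced by a continuous map. -/
noncomputable def singularChainsMap {X Y : TopCat} (f : X ⟶ Y) :
    singularChains X ⟶ singularChains Y :=
  (alternatingFaceMapComplex (ModuleCat ℤ)).map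
    (((SimplicialObject.whiskering _ _).obj (ModuleCat.free ℤ)).map (TopCat.toSSet.map f))

theorem singularChainsMap_comp {X Y Z : TopCat} (f : X ⟶ Y) (g : Y ⟶ Z) :
    singularChainsMap (f ≫ g) = singularChainsMap f ≫ singularChainsMap g := by
  simp [singularChainsMap, Functor.map_comp] <;> rfl

/-- The relative singular chain complex `C_*(B; ℤ)/C_*(A; ℤ)` of a pair of subspaces
`A ⊆ B` of an ambient space `X`, whose homology is the relative singular homology
`H_*(B, A; ℤ)`. -/
noncomputable def pairChains (X : Type) [TopologicalSpace X] (B A : Set X) (hAB : A ⊆ B) :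
    ChainComplex (ModuleCat ℤ) ℕ :=
  cokernel (singularChainsMap (X := TopCat.of A) (Y := TopCat.of B)
    (TopCat.ofHom ⟨fun a => ⟨a.1, hAB a.2⟩, Continuous.subtype_mk continuous_subtype_val _⟩))

/-- The map of relative singular chain complexes induced by a filtration-preserving
continuous map. -/
noncomputable def pairChainsMap {X Y : Type} [TopologicalSpace X] [TopologicalSpace Y]
    (f : C(X, Y)) (B A : Set X) (hAB : A ⊆ B) (B' A' : Set Y) (hAB' : A' ⊆ B')
    (hB : Set.MapsTo f B B') (hA : Set.MapsTo f A A') :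
    pairChains X B A hAB ⟶ pairChains Y B' A' hAB' :=
  cokernel.map _ _
    (singularChainsMap (X := TopCat.of A) (Y := TopCat.of A')
      (TopCat.ofHom ⟨fun a => ⟨f a.1, hA a.2⟩,
        Continuous.subtype_mk (f.continuous.comp continuous_subtype_val) _⟩))
    (singularChainsMap (X := TopCat.of B) (Y := TopCat.of B')
      (TopCat.ofHom ⟨fun b => ⟨f b.1, hB b.2⟩,
        Continuous.subtype_mk (f.continuous.comp continuous_subtype_val) _⟩))
    (by
      rw [← singularChainsMap_comp, ← singularChainsMap_comp]
      rfl)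

open HomologicalComplex

-- mono of componentwise mono
lemma mono_of_mono_f' {K L : ChainComplex (ModuleCat ℤ) ℕ} (φ : K ⟶ L)
    (h : ∀ n, Mono (φ.f n)) : Mono φ := by
  refine ⟨fun {Z} u v huv => ?_⟩
  ext n : 1
  have := congrArg (fun ψ => HomologicalComplex.Hom.f ψ n) huv
  simp only [HomologicalComplex.comp_f] at this
  exact (cancel_mono (φ.f n)).1 this

lemma mono_singularChainsMap {A B : TopCat} (g : A ⟶ B) (hg : Function.Injective g) :
    Mono (singularChainsMap g) := by
  refine mono_of_mono_f' _ (fun n => ?_)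
  rw [ModuleCat.mono_iff_injective]
  show Function.Injective
    ((ModuleCat.free ℤ).map ((TopCat.toSSet.map g).app (Opposite.op (SimplexCategory.mk n))))
  show Function.Injective (Finsupp.mapDomain _)
  apply Finsupp.mapDomain_injective
  intro σ τ h
  obtain ⟨σ⟩ := σ
  obtain ⟨τ⟩ := τ
  congr 1
  apply TopCat.ext
  intro x
  exact hg (ConcreteCategory.congr_hom (congrArg ULift.down h) x)

noncomputable def pairι (X : Type) [TopologicalSpace X] (B A : Set X) (hAB : A ⊆ B) :
    singularChains (TopCat.of A) ⟶ singularChains (TopCat.of B) :=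
  singularChainsMap (TopCat.ofHom ⟨fun a => ⟨a.1, hAB a.2⟩, Continuous.subtype_mk continuous_subtype_val _⟩)

noncomputable def pairSES (X : Type) [TopologicalSpace X] (B A : Set X) (hAB : A ⊆ B) :
    CategoryTheory.ShortComplex (ChainComplex (ModuleCat ℤ) ℕ) :=
  ShortComplex.mk (pairι X B A hAB)
    (cokernel.π (pairι X B A hAB) : _ ⟶ pairChains X B A hAB)
    (cokernel.condition _)

lemma pairSES_shortExact (X : Type) [TopologicalSpace X] (B A : Set X) (hAB : A ⊆ B) :
    (pairSES X B A hAB).ShortExact := by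
  have : Mono (pairSES X B A hAB).f := by
    apply mono_singularChainsMap
    intro a b h
    have h' := congrArg Subtype.val h
    exact Subtype.ext h'
  have : Epi (pairSES X B A hAB).g := by
    show Epi (cokernel.π _); exact coequalizer.π_epi
  exact { exact := ShortComplex.exact_of_g_is_cokernel _ (cokernelIsCokernel _) }

noncomputable def pairSESMap {X Y : Type} [TopologicalSpace X] [TopologicalSpace Y]
    (f : C(X, Y)) (B A : Set X) (hAB : A ⊆ B) (B' A' : Set Y) (hAB' : A' ⊆ B')
    (hB : Set.MapsTo f B B') (hA : Set.MapsTo f A A') :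
    pairSES X B A hAB ⟶ pairSES Y B' A' hAB' where
  τ₁ := singularChainsMap (X := TopCat.of A) (Y := TopCat.of A')
      (TopCat.ofHom ⟨fun a => ⟨f a.1, hA a.2⟩,
        Continuous.subtype_mk (f.continuous.comp continuous_subtype_val) _⟩)
  τ₂ := singularChainsMap (X := TopCat.of B) (Y := TopCat.of B')
      (TopCat.ofHom ⟨fun b => ⟨f b.1, hB b.2⟩,
        Continuous.subtype_mk (f.continuous.comp continuous_subtype_val) _⟩)
  τ₃ := pairChainsMap f B A hAB B' A' hAB' hB hA
  comm₁₂ := by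
    show _ ≫ pairι Y B' A' hAB' = pairι X B A hAB ≫ _
    rw [pairι, pairι, ← singularChainsMap_comp, ← singularChainsMap_comp]
    rfl
  comm₂₃ := by
    refine Eq.symm ?_
    exact cokernel.π_desc _ _ _

-- τ₂ five lemma for homology sequences
lemma isIso_homologyMap_τ₂' {C ι : Type*} [Category C] [Abelian C] {c : ComplexShape ι}
    {S₁ S₂ : ShortComplex (HomologicalComplex C c)} (φ : S₁ ⟶ S₂)
    (hS₁ : S₁.ShortExact) (hS₂ : S₂.ShortExact) (j : ι)
    (h₁ : IsIso (homologyMap φ.τ₁ j)) (h₃ : IsIso (homologyMap φ.τ₃ j))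
    (hprev : ∀ i, c.Rel i j → Epi (homologyMap φ.τ₃ i))
    (hnext : ∀ l, c.Rel j l → Mono (homologyMap φ.τ₁ l)) :
    IsIso (homologyMap φ.τ₂ j) := by
  have hmono : Mono (homologyMap φ.τ₂ j) := by
    by_cases hi : ∃ i, c.Rel i j
    · obtain ⟨i, hij⟩ := hi
      apply Abelian.mono_of_epi_of_mono_of_mono
        ((ComposableArrows.δ₀Functor ⋙ ComposableArrows.δ₀Functor).map
          (HomologySequence.mapComposableArrows₅ φ hS₁ hS₂ i j hij))
      · exact (HomologySequence.composableArrows₅_exact hS₁ i j hij).δ₀.δ₀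
      · exact (HomologySequence.composableArrows₅_exact hS₂ i j hij).δ₀.δ₀
      · exact hprev i hij
      · exact h₁.mono_of_iso _
      · exact h₃.mono_of_iso _
    · have := hS₂.mono_f
      refine Abelian.mono_of_mono_of_mono_of_mono
        (HomologySequence.mapComposableArrows₂ φ j)
        (HomologySequence.composableArrows₂_exact hS₁ j) ?_ ?_ ?_
      · exact mono_homologyMap_of_mono_of_not_rel S₂.f j (by simpa using hi)
      · exact h₁.mono_of_iso _
      · exact h₃.mono_of_iso _
  have hepi : Epi (homologyMap φ.τ₂ j) := by
    by_cases hl : ∃ l, c.Rel j l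
    · obtain ⟨l, hjl⟩ := hl
      apply Abelian.epi_of_epi_of_epi_of_mono
        ((ComposableArrows.δlastFunctor ⋙ ComposableArrows.δlastFunctor).map
          (HomologySequence.mapComposableArrows₅ φ hS₁ hS₂ j l hjl))
      · exact (HomologySequence.composableArrows₅_exact hS₁ j l hjl).δlast.δlast
      · exact (HomologySequence.composableArrows₅_exact hS₂ j l hjl).δlast.δlast
      · exact h₁.epi_of_iso _
      · exact h₃.epi_of_iso _
      · exact hnext l hjl
    · have := hS₁.epi_g
      refine Abelian.epi_of_epi_of_epi_of_epi
        (HomologySequence.mapComposableArrows₂ φ j)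
        (HomologySequence.composableArrows₂_exact hS₂ j) ?_ ?_ ?_
      · exact epi_homologyMap_of_epi_of_not_rel S₁.g j (by simpa using hl)
      · exact h₁.epi_of_iso _
      · exact h₃.epi_of_iso _
  exact isIso_of_mono_of_epi _

noncomputable def singularChainsFunctor' : TopCat ⥤ ChainComplex (ModuleCat ℤ) ℕ :=
  TopCat.toSSet ⋙ (SimplicialObject.whiskering _ _).obj (ModuleCat.free ℤ) ⋙
    alternatingFaceMapComplex (ModuleCat ℤ)

lemma bijective_homology_of_isIso {A B : TopCat} (g : A ⟶ B) [IsIso g] (j : ℕ) :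
    Function.Bijective (homologyMap (singularChainsMap g) j) := by
  haveI h1 : IsIso (singularChainsMap g) :=
    (inferInstance : IsIso (singularChainsFunctor'.map g))
  haveI h2 : IsIso (homologyMap (singularChainsMap g) j) :=
    (inferInstance : IsIso ((homologyFunctor (ModuleCat ℤ)
      (ComplexShape.down ℕ) j).map (singularChainsMap g)))
  exact ConcreteCategory.bijective_of_isIso (homologyMap (singularChainsMap g) j)

lemma bij_iff_isIso {M N : ModuleCat ℤ} (g : M ⟶ N) :
    IsIso g ↔ Function.Bijective g := by
  constructor
  · intro h
    haveI := h
    exact ConcreteCategory.bijective_of_isIso g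
  · intro h
    haveI : IsIso ((CategoryTheory.forget (ModuleCat ℤ)).map g) :=
      (CategoryTheory.isIso_iff_bijective _).2 h
    exact isIso_of_reflects_iso g (CategoryTheory.forget _)

/-- Proposition: if `f : X → Y` respects filtrations
`∅ = X_{-1} ⊆ X_0 ⊆ ⋯ ⊆ X_m = X` and `∅ = Y_{-1} ⊆ Y_0 ⊆ ⋯ ⊆ Y_m = Y` (here reindexed
by `ℕ`, with `FX 0 = ∅` playing the role of `X_{-1}` and `FX (m+1) = X` that of `X_m`),
and induces isomorphisms on relative singular homology
`H_j(X_i, X_{i-1}; ℤ) → H_j(Y_i, Y_{i-1}; ℤ)` for all `i = 0, …, m` and `j ≤ k + 1`,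
then it induces isomorphisms `H_j(X; ℤ) → H_j(Y; ℤ)` for all `j ≤ k`. -/
theorem singular_homology_iso_of_filtration_iso
    {X Y : Type} [TopologicalSpace X] [TopologicalSpace Y] (f : C(X, Y)) (k m : ℕ)
    (FX : ℕ → Set X) (FY : ℕ → Set Y) (hmX : Monotone FX) (hmY : Monotone FY)
    (hX0 : FX 0 = ∅) (hY0 : FY 0 = ∅)
    (hXtop : FX (m + 1) = Set.univ) (hYtop : FY (m + 1) = Set.univ)
    (hf : ∀ i, Set.MapsTo f (FX i) (FY i))
    (hiso : ∀ i ≤ m, ∀ j ≤ k + 1,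
      Function.Bijective (HomologicalComplex.homologyMap
        (pairChainsMap f (FX (i + 1)) (FX i) (hmX (Nat.le_succ i))
          (FY (i + 1)) (FY i) (hmY (Nat.le_succ i)) (hf (i + 1)) (hf i)) j)) :
    ∀ j ≤ k, Function.Bijective (HomologicalComplex.homologyMap
      (singularChainsMap (X := TopCat.of X) (Y := TopCat.of Y) (TopCat.ofHom f)) j) := by
  intro j hj
  let σ : ∀ i, (TopCat.of ↥(FX i) ⟶ TopCat.of ↥(FY i)) := fun i =>
    TopCat.ofHom ⟨fun a => ⟨f a.1, hf i a.2⟩,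
      Continuous.subtype_mk (f.continuous.comp continuous_subtype_val) _⟩
  have key : ∀ i, i ≤ m + 1 → ∀ j, j ≤ k →
      Function.Bijective (homologyMap (singularChainsMap (σ i)) j) := by
    intro i
    induction i with
    | zero =>
      intro _ j _
      haveI hEX : IsEmpty ↥(FX 0) := by rw [hX0]; infer_instance
      haveI hEY : IsEmpty ↥(FY 0) := by rw [hY0]; infer_instance
      haveI : IsEmpty ↑(TopCat.of ↥(FX 0)) := hEX
      haveI : IsEmpty ↑(TopCat.of ↥(FY 0)) := hEY
      haveI : IsIso (σ 0) := by
        refine ⟨⟨TopCat.ofHom ⟨fun b => isEmptyElim b, continuous_empty_function _⟩, ?_, ?_⟩⟩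
        · apply TopCat.ext; intro a; exact isEmptyElim a
        · apply TopCat.ext; intro b; exact isEmptyElim b
      exact bijective_homology_of_isIso (σ 0) j
    | succ i IH =>
      intro hi j hj
      have him : i ≤ m := Nat.lt_succ_iff.mp hi
      have hSX := pairSES_shortExact X (FX (i+1)) (FX i) (hmX (Nat.le_succ i))
      have hSY := pairSES_shortExact Y (FY (i+1)) (FY i) (hmY (Nat.le_succ i))
      let φ := pairSESMap f (FX (i+1)) (FX i) (hmX (Nat.le_succ i)) (FY (i+1)) (FY i)
        (hmY (Nat.le_succ i)) (hf (i+1)) (hf i)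
      have h₁ : IsIso (homologyMap φ.τ₁ j) := by
        rw [bij_iff_isIso]
        exact IH (le_of_lt hi) j hj
      have h₃ : IsIso (homologyMap φ.τ₃ j) := by
        rw [bij_iff_isIso]
        exact hiso i him j (le_trans hj (Nat.le_succ k))
      have hprev : ∀ i', (ComplexShape.down ℕ).Rel i' j → Epi (homologyMap φ.τ₃ i') := by
        intro i' hrel
        rw [ComplexShape.down_Rel] at hrel
        have : IsIso (homologyMap φ.τ₃ i') := by
          rw [bij_iff_isIso]
          exact hiso i him i' (by omega)
        infer_instance
      have hnext : ∀ l, (ComplexShape.down ℕ).Rel j l → Mono (homologyMap φ.τ₁ l) := by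
        intro l hrel
        rw [ComplexShape.down_Rel] at hrel
        have : IsIso (homologyMap φ.τ₁ l) := by
          rw [bij_iff_isIso]
          exact IH (le_of_lt hi) l (by omega)
        infer_instance
      have := isIso_homologyMap_τ₂' φ hSX hSY j h₁ h₃ hprev hnext
      rw [bij_iff_isIso] at this
      exact this
  -- glue with the inclusions of the top filtration step
  let eX : TopCat.of ↥(FX (m+1)) ⟶ TopCat.of X := TopCat.ofHom ⟨Subtype.val, continuous_subtype_val⟩
  let eY : TopCat.of ↥(FY (m+1)) ⟶ TopCat.of Y := TopCat.ofHom ⟨Subtype.val, continuous_subtype_val⟩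
  have hmemX : ∀ x : X, x ∈ FX (m+1) := fun x => hXtop ▸ Set.mem_univ x
  have hmemY : ∀ y : Y, y ∈ FY (m+1) := fun y => hYtop ▸ Set.mem_univ y
  let eX' : TopCat.of X ⟶ TopCat.of ↥(FX (m+1)) :=
    TopCat.ofHom ⟨fun x => ⟨x, hmemX x⟩, Continuous.subtype_mk continuous_id _⟩
  let eY' : TopCat.of Y ⟶ TopCat.of ↥(FY (m+1)) :=
    TopCat.ofHom ⟨fun y => ⟨y, hmemY y⟩, Continuous.subtype_mk continuous_id _⟩
  haveI : IsIso eX := by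
    refine ⟨⟨eX', ?_, ?_⟩⟩
    · apply TopCat.ext; intro a; exact Subtype.ext rfl
    · apply TopCat.ext; intro x; rfl
  haveI : IsIso eY := by
    refine ⟨⟨eY', ?_, ?_⟩⟩
    · apply TopCat.ext; intro a; exact Subtype.ext rfl
    · apply TopCat.ext; intro y; rfl
  have hcomm : σ (m+1) ≫ eY = eX ≫ TopCat.ofHom f := by
    apply TopCat.ext; intro a; rfl
  have e1 : homologyMap (singularChainsMap (σ (m+1))) j ≫
        homologyMap (singularChainsMap eY) j =
      homologyMap (singularChainsMap eX) j ≫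
        homologyMap (singularChainsMap (X := TopCat.of X) (Y := TopCat.of Y) (TopCat.ofHom f)) j := by
    rw [← homologyMap_comp, ← homologyMap_comp, ← singularChainsMap_comp,
      ← singularChainsMap_comp, hcomm]
  have hbσ := key (m+1) le_rfl j hj
  have hbY := bijective_homology_of_isIso eY j
  have hbX := bijective_homology_of_isIso eX j
  have e2 : (⇑(homologyMap (singularChainsMap (X := TopCat.of X) (Y := TopCat.of Y) (TopCat.ofHom f)) j)
      ∘ ⇑(homologyMap (singularChainsMap eX) j)) =
      (⇑(homologyMap (singularChainsMap eY) j) ∘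
        ⇑(homologyMap (singularChainsMap (σ (m+1))) j)) := by
    funext x
    have := ConcreteCategory.congr_hom e1 x
    simpa using this.symm
  have hLHS : Function.Bijective (⇑(homologyMap (singularChainsMap eY) j) ∘
      ⇑(homologyMap (singularChainsMap (σ (m+1))) j)) := hbY.comp hbσ
  rw [← e2] at hLHS
  exact (Function.Bijective.of_comp_iff _ hbX).mp hLHS
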